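/- Let a, b ∈ ℝⁿ be nonzero vectors, and let x = a + s·b and y = a + t·b with s, t ∈ [0, ∞) and x, y ≠ 0. Then the angle between x and y is at most the angle between a and b, i.e., cos(angle(x,y)) ≥ cos(angle(a,b)). -/

import Mathlib

open InnerProductGeometry

private lemma sq_le_sq_imp_le (u v : ℝ) (hu : 0 ≤ u) (hv : 0 ≤ v) (h : u^2 ≤ v^2) :
    u ≤ v := by nlinarith

theorem stmt_1 (n : ℕ) (a b : EuclideanSpace ℝ (Fin n))
    (ha : a ≠ 0) (hb : b ≠ 0) (s t : ℝ) (hs : 0 ≤ s) (ht : 0 ≤ t)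
    (x y : EuclideanSpace ℝ (Fin n))
    (hx : x = a + s • b) (hy : y = a + t • b)
    (hx0 : x ≠ 0) (hy0 : y ≠ 0) :
    Real.cos (angle a b) ≤ Real.cos (angle x y) := by
  have hA : (0:ℝ) < ‖a‖ := norm_pos_iff.mpr ha
  have hB : (0:ℝ) < ‖b‖ := norm_pos_iff.mpr hb
  have hX : (0:ℝ) < ‖x‖ := norm_pos_iff.mpr hx0
  have hY : (0:ℝ) < ‖y‖ := norm_pos_iff.mpr hy0
  rw [cos_angle, cos_angle, div_le_div_iff₀ (by positivity) (by positivity)]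
  have hq : (inner ℝ x y : ℝ) = ‖a‖^2 + (s+t)*(inner ℝ a b : ℝ) + s*t*‖b‖^2 := by
    rw [hx, hy]
    simp only [inner_add_left, inner_add_right, real_inner_smul_left, real_inner_smul_right,
      real_inner_self_eq_norm_sq, real_inner_comm b a]
    ring
  have hX2 : ‖x‖^2 = ‖a‖^2 + 2*s*(inner ℝ a b : ℝ) + s^2*‖b‖^2 := by
    rw [← real_inner_self_eq_norm_sq, hx]
    simp only [inner_add_left, inner_add_right, real_inner_smul_left, real_inner_smul_right,
      real_inner_self_eq_norm_sq, real_inner_comm b a, norm_smul, Real.norm_eq_abs,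
      mul_pow, sq_abs]
    ring
  have hY2 : ‖y‖^2 = ‖a‖^2 + 2*t*(inner ℝ a b : ℝ) + t^2*‖b‖^2 := by
    rw [← real_inner_self_eq_norm_sq, hy]
    simp only [inner_add_left, inner_add_right, real_inner_smul_left, real_inner_smul_right,
      real_inner_self_eq_norm_sq, real_inner_comm b a, norm_smul, Real.norm_eq_abs,
      mul_pow, sq_abs]
    ring
  have hC : ((inner ℝ a b : ℝ))^2 ≤ ‖a‖^2 * ‖b‖^2 := by
    have h := abs_real_inner_le_norm a b
    nlinarith [abs_nonneg (inner ℝ a b : ℝ), sq_abs (inner ℝ a b : ℝ)]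
  set A := ‖a‖ with hAdef
  set B := ‖b‖ with hBdef
  set X := ‖x‖ with hXdef
  set Y := ‖y‖ with hYdef
  set p := (inner ℝ a b : ℝ) with hp
  set q := (inner ℝ x y : ℝ) with hqdef
  clear_value A B X Y p q
  clear hx hy hx0 hy0 ha hb hAdef hBdef hXdef hYdef hp hqdef a b
  have hGram : X^2 * Y^2 - q^2 = (t-s)^2 * (A^2*B^2 - p^2) := by
    rw [hX2, hY2, hq]; ring
  have key : q^2*A^2*B^2 - p^2*X^2*Y^2 = (A^2*B^2 - p^2)*(q^2 - p^2*(t-s)^2) := by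
    linear_combination (-(p^2)) * hGram
  -- goal : p * (X * Y) ≤ q * (A * B)
  rcases le_or_gt 0 p with hp0 | hp0
  · have hst : 0 ≤ (s+t)*p := mul_nonneg (by linarith) hp0
    have hstB : 0 ≤ s*t*B^2 := mul_nonneg (mul_nonneg hs ht) (sq_nonneg B)
    have hq0 : 0 ≤ q := by nlinarith [sq_nonneg A]
    have h1 : p*(t-s) ≤ q := by nlinarith [sq_nonneg A, mul_nonneg hs hp0]
    have h2 : p*(s-t) ≤ q := by nlinarith [sq_nonneg A, mul_nonneg ht hp0]
    have hq2 : p^2*(t-s)^2 ≤ q^2 := by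
      have h := sq_le_sq' (by linarith : -q ≤ p*(t-s)) h1
      calc p^2*(t-s)^2 = (p*(t-s))^2 := by ring
        _ ≤ q^2 := h
    have h3 : 0 ≤ (A^2*B^2 - p^2)*(q^2 - p^2*(t-s)^2) :=
      mul_nonneg (by linarith) (by linarith)
    have hsq : (p*(X*Y))^2 ≤ (q*(A*B))^2 := by linarith [key, h3]
    exact sq_le_sq_imp_le _ _ (mul_nonneg hp0 (mul_pos hX hY).le)
      (mul_nonneg hq0 (mul_pos hA hB).le) hsq
  · rcases le_or_gt 0 q with hq0 | hq0
    · have h1 : p * (X*Y) ≤ 0 := mul_nonpos_of_nonpos_of_nonneg hp0.le (mul_pos hX hY).le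
      have h2 : 0 ≤ q * (A*B) := mul_nonneg hq0 (mul_pos hA hB).le
      linarith
    · have hq2 : q^2 ≤ p^2*(t-s)^2 := by
        rcases le_total s t with hst | hst
        · have h1 : -q ≤ (-p)*(t-s) := by
            linarith [hX2, hq, sq_nonneg X,
              mul_nonneg (mul_nonneg hs (sub_nonneg.mpr hst)) (sq_nonneg B)]
          have h := sq_le_sq' (by linarith : -((-p)*(t-s)) ≤ q) (by linarith : q ≤ (-p)*(t-s))
          calc q^2 ≤ ((-p)*(t-s))^2 := h
            _ = p^2*(t-s)^2 := by ring
        · have h1 : -q ≤ (-p)*(s-t) := by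
            linarith [hY2, hq, sq_nonneg Y,
              mul_nonneg (mul_nonneg ht (sub_nonneg.mpr hst)) (sq_nonneg B)]
          have h := sq_le_sq' (by linarith : -((-p)*(s-t)) ≤ q) (by linarith : q ≤ (-p)*(s-t))
          calc q^2 ≤ ((-p)*(s-t))^2 := h
            _ = p^2*(t-s)^2 := by ring
      have h3 : 0 ≤ (A^2*B^2 - p^2)*(p^2*(t-s)^2 - q^2) :=
        mul_nonneg (by linarith) (by linarith)
      have hsq : (q*(A*B))^2 ≤ (p*(X*Y))^2 := by linarith [key, h3]
      have hsq' : (-(q*(A*B)))^2 ≤ (-(p*(X*Y)))^2 := by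
        simpa [neg_pow] using hsq
      have := sq_le_sq_imp_le _ _
        (mul_nonneg (neg_nonneg.mpr hq0.le) (mul_pos hA hB).le)
        (mul_nonneg (neg_nonneg.mpr hp0.le) (mul_pos hX hY).le)
        (by simpa [neg_mul] using hsq')
      linarith [this]
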